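/- In the DFA A obtained by the subset construction from the concatenation NFA A_1·A_2 of the two-letter Brzozowski pair, any two distinct valid states (p_i, S) and (p_{i'}, S') are non-equivalent: there is a word w over {a,b} such that exactly one of the two resulting states contains the final state q_{n−1}. -/

import Mathlib

/-- The concatenation NFA `A·B` of two NFAs with disjoint state sets (modelled by the
sum type `σ₁ ⊕ σ₂`): its states are `Q_A ∪ Q_B`, its final states are `F_B`,
its initial states are `I_A` if `I_A ∩ F_A = ∅` and `I_A ∪ I_B` otherwise, and its
transitions are: for `q ∈ Q_B`, `δ(q,x) = δ_B(q,x)`; for `q ∈ Q_A`,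
`δ(q,x) = δ_A(q,x)` if `δ_A(q,x) ∩ F_A = ∅`, and `δ(q,x) = δ_A(q,x) ∪ I_B` otherwise. -/
def nfaConcat {Sig σ₁ σ₂ : Type*} (A : NFA Sig σ₁) (B : NFA Sig σ₂) :
    NFA Sig (σ₁ ⊕ σ₂) where
  step q a :=
    match q with
    | Sum.inl q =>
        Sum.inl '' A.step q a ∪
          {x | (A.step q a ∩ A.accept).Nonempty ∧ x ∈ Sum.inr '' B.start}
    | Sum.inr q => Sum.inr '' B.step q a
  start :=
    Sum.inl '' A.start ∪ {x | (A.start ∩ A.accept).Nonempty ∧ x ∈ Sum.inr '' B.start}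
  accept := Sum.inr '' B.accept

/-- The first DFA of the two-letter Brzozowski pair: states `p_0,…,p_{m−1}`, initial
state `p_0`, unique final state `p_{m−1}`; the letter `a` (encoded `0 : Fin 2`) acts as
the cyclic permutation `p_i ↦ p_{(i+1) mod m}` and `b` (encoded `1`) acts as the
transposition exchanging `p_0` and `p_1`. -/
def dfaW1 (m : ℕ) (h : 0 < m) : DFA (Fin 2) (Fin m) where
  step i x :=
    if x = 0 then ⟨(i.val + 1) % m, Nat.mod_lt _ h⟩
    else ⟨(if i.val = 0 then 1 else if i.val = 1 then 0 else i.val) % m, Nat.mod_lt _ h⟩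
  start := ⟨0, h⟩
  accept := {⟨m - 1, by omega⟩}

/-- The second DFA of the two-letter Brzozowski pair: states `q_0,…,q_{n−1}`, initial
state `q_0`, unique final state `q_{n−1}`; the letter `a` acts as the cyclic permutation
`q_j ↦ q_{(j+1) mod n}` and `b` acts as the contraction sending `q_1` to `q_0` and
fixing all other states. -/
def dfaW2 (n : ℕ) (h : 0 < n) : DFA (Fin 2) (Fin n) where
  step j x :=
    if x = 0 then ⟨(j.val + 1) % n, Nat.mod_lt _ h⟩
    else ⟨(if j.val = 1 then 0 else j.val) % n, Nat.mod_lt _ h⟩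
  start := ⟨0, h⟩
  accept := {⟨n - 1, by omega⟩}


namespace BrzHelp

variable {m n : ℕ}

def stepPair (hm : 0 < m) (hn : 0 < n) (p : Fin m × Set (Fin n)) (x : Fin 2) :
    Fin m × Set (Fin n) :=
  ((dfaW1 m hm).step p.1 x,
    (fun q => (dfaW2 n hn).step q x) '' p.2 ∪
      (if (dfaW1 m hm).step p.1 x = (⟨m - 1, by omega⟩ : Fin m) then {(⟨0, hn⟩ : Fin n)}
       else (∅ : Set (Fin n))))

def runPair (hm : 0 < m) (hn : 0 < n) (p : Fin m × Set (Fin n)) (w : List (Fin 2)) :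
    Fin m × Set (Fin n) :=
  w.foldl (stepPair hm hn) p

def enc (p : Fin m × Set (Fin n)) : Set (Fin m ⊕ Fin n) :=
  {Sum.inl p.1} ∪ Sum.inr '' p.2

lemma step_enc (hm : 0 < m) (hn : 0 < n) (p : Fin m × Set (Fin n)) (x : Fin 2) :
    (nfaConcat (dfaW1 m hm).toNFA (dfaW2 n hn).toNFA).toDFA.step (enc p) x
      = enc (stepPair hm hn p x) := by
  obtain ⟨i, S⟩ := p
  show (nfaConcat (dfaW1 m hm).toNFA (dfaW2 n hn).toNFA).stepSet (enc (i, S)) x = _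
  ext y
  rw [NFA.mem_stepSet]
  simp only [enc, stepPair, nfaConcat, DFA.toNFA, Set.mem_union, Set.mem_singleton_iff,
    Set.mem_image, Set.mem_setOf_eq, Set.singleton_inter_nonempty]
  constructor
  · rintro ⟨t, ht, hy⟩
    rcases ht with rfl | ⟨s, hs, rfl⟩
    · rcases hy with ⟨z, hz, rfl⟩ | ⟨hacc, z, hz, rfl⟩
      · exact Or.inl (by rw [hz])
      · refine Or.inr ⟨z, Or.inr ?_, rfl⟩
        have hacc' : (dfaW1 m hm).step i x = (⟨m - 1, by omega⟩ : Fin m) := hacc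
        rw [if_pos hacc']
        exact hz
    · rcases hy with ⟨z, hz, rfl⟩
      exact Or.inr ⟨z, Or.inl ⟨s, hs, (show z = _ from hz).symm⟩, rfl⟩
  · rintro (rfl | ⟨q, hq, rfl⟩)
    · exact ⟨Sum.inl i, Or.inl rfl, Or.inl ⟨_, rfl, rfl⟩⟩
    · rcases hq with ⟨s, hs, rfl⟩ | hq
      · exact ⟨Sum.inr s, Or.inr ⟨s, hs, rfl⟩, ⟨_, rfl, rfl⟩⟩

      · by_cases hacc : (dfaW1 m hm).step i x = (⟨m - 1, by omega⟩ : Fin m)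
        · rw [if_pos hacc] at hq
          refine ⟨Sum.inl i, Or.inl rfl, Or.inr ⟨hacc, q, ?_, rfl⟩⟩
          exact hq
        · rw [if_neg hacc] at hq
          exact absurd hq (Set.notMem_empty q)

lemma evalFrom_enc (hm : 0 < m) (hn : 0 < n) (p : Fin m × Set (Fin n)) (w : List (Fin 2)) :
    (nfaConcat (dfaW1 m hm).toNFA (dfaW2 n hn).toNFA).toDFA.evalFrom (enc p) w
      = enc (runPair hm hn p w) := by
  induction w generalizing p with
  | nil => rfl
  | cons x w ih =>
      have h1 : (nfaConcat (dfaW1 m hm).toNFA (dfaW2 n hn).toNFA).toDFA.evalFrom (enc p) (x :: w)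
          = (nfaConcat (dfaW1 m hm).toNFA (dfaW2 n hn).toNFA).toDFA.evalFrom
              ((nfaConcat (dfaW1 m hm).toNFA (dfaW2 n hn).toNFA).toDFA.step (enc p) x) w := rfl
      rw [h1, step_enc]
      exact ih _


lemma mem_enc_inr (p : Fin m × Set (Fin n)) (q : Fin n) :
    Sum.inr q ∈ enc p ↔ q ∈ p.2 := by
  simp [enc]

lemma stepPair_a (hm : 0 < m) (hn : 0 < n) (k : Fin m) (T : Set (Fin n)) :
    stepPair hm hn (k, T) 0
      = ((⟨(k.val + 1) % m, Nat.mod_lt _ hm⟩ : Fin m),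
         (fun s : Fin n => (⟨(s.val + 1) % n, Nat.mod_lt _ hn⟩ : Fin n)) '' T ∪
           (if (k.val + 1) % m = m - 1 then {(⟨0, hn⟩ : Fin n)} else (∅ : Set (Fin n)))) := by
  simp [stepPair, dfaW1, dfaW2, Fin.mk.injEq]

lemma runPair_cons (hm : 0 < m) (hn : 0 < n) (p : Fin m × Set (Fin n)) (x : Fin 2)
    (w : List (Fin 2)) : runPair hm hn p (x :: w) = runPair hm hn (stepPair hm hn p x) w := rfl

lemma runPair_fst_a (hm : 0 < m) (hn : 0 < n) :
    ∀ (L : ℕ) (k : Fin m) (T : Set (Fin n)),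
      ((runPair hm hn (k, T) (List.replicate L 0)).1).val = (k.val + L) % m := by
  intro L
  induction L with
  | zero => intro k T; simp [runPair, Nat.mod_eq_of_lt k.isLt]
  | succ L ih =>
      intro k T
      rw [List.replicate_succ, runPair_cons, stepPair_a, ih]
      simp only [Nat.mod_add_mod]
      congr 1
      omega

lemma memA (hm : 0 < m) (hn : 0 < n) :
    ∀ (L : ℕ), L ≤ n - 1 → ∀ (k : Fin m) (T : Set (Fin n)),
      ((⟨n - 1, by omega⟩ : Fin n) ∈ (runPair hm hn (k, T) (List.replicate L 0)).2
        ↔ (⟨n - 1 - L, by omega⟩ : Fin n) ∈ T) := by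
  intro L
  induction L with
  | zero => intro _ k T; simp [runPair]
  | succ L ih =>
      intro hL k T
      rw [List.replicate_succ, runPair_cons, stepPair_a, ih (by omega)]
      constructor
      · rintro (⟨s, hs, hval⟩ | h)
        · have h2 : (s.val + 1) % n = n - 1 - L := congrArg Fin.val hval
          have h3 : s.val = n - 1 - (L + 1) := by
            rcases Nat.lt_or_ge (s.val + 1) n with h4 | h4
            · rw [Nat.mod_eq_of_lt h4] at h2; omega
            · have h5 : s.val + 1 = n := by have := s.isLt; omega
              rw [h5, Nat.mod_self] at h2; omega
          have : s = (⟨n - 1 - (L + 1), by omega⟩ : Fin n) := Fin.ext h3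
          rwa [← this]
        · exfalso
          rcases Decidable.em ((k.val + 1) % m = m - 1) with hc | hc
          · rw [if_pos hc] at h
            have := congrArg Fin.val (Set.mem_singleton_iff.mp h)
            simp at this
            omega
          · rw [if_neg hc] at h
            exact Set.notMem_empty _ h
      · intro hT
        refine Or.inl ⟨⟨n - 1 - (L + 1), by omega⟩, hT, ?_⟩
        apply Fin.ext
        show (n - 1 - (L + 1) + 1) % n = n - 1 - L
        rw [Nat.mod_eq_of_lt (by omega)]
        omega

lemma memB (hm : 0 < m) (hn : 0 < n) :
    ∀ (L : ℕ) (k : Fin m) (T : Set (Fin n)),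
      ((⟨n - 1, by omega⟩ : Fin n) ∈ (runPair hm hn (k, T) (List.replicate L 0)).2
        ↔ ((∃ s ∈ T, (s.val + L) % n = n - 1) ∨
            ∃ t, 1 ≤ t ∧ t ≤ L ∧ (k.val + t) % m = m - 1 ∧ (L - t) % n = n - 1)) := by
  intro L
  induction L with
  | zero =>
      intro k T
      simp only [List.replicate, runPair, List.foldl_nil]
      constructor
      · intro h
        exact Or.inl ⟨_, h, by rw [Nat.add_zero, Nat.mod_eq_of_lt (by omega)]⟩
      · rintro (⟨s, hs, hval⟩ | ⟨t, ht1, ht2, _⟩)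
        · have : s = (⟨n - 1, by omega⟩ : Fin n) := by
            apply Fin.ext
            rw [Nat.add_zero, Nat.mod_eq_of_lt s.isLt] at hval
            exact hval
          rwa [← this]
        · omega
  | succ L ih =>
      intro k T
      rw [List.replicate_succ, runPair_cons, stepPair_a, ih]
      constructor
      · rintro (⟨s, hs, hval⟩ | ⟨t, ht1, ht2, hk, hL⟩)
        · rcases hs with ⟨s₀, hs₀, rfl⟩ | hs
          · refine Or.inl ⟨s₀, hs₀, ?_⟩
            show (s₀.val + (L + 1)) % n = n - 1
            rw [show s₀.val + (L + 1) = s₀.val + 1 + L by omega, ← Nat.mod_add_mod]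
            exact hval
          · rcases Decidable.em ((k.val + 1) % m = m - 1) with hc | hc
            · rw [if_pos hc] at hs
              have h0 : s = (⟨0, hn⟩ : Fin n) := hs
              refine Or.inr ⟨1, le_refl _, by omega, hc, ?_⟩
              · rw [show L + 1 - 1 = L by omega]
                have := congrArg Fin.val h0
                simp only at this
                rw [this, Nat.zero_add] at hval
                exact hval
            · rw [if_neg hc] at hs
              exact absurd hs (Set.notMem_empty _)
        · refine Or.inr ⟨t + 1, by omega, by omega, ?_, ?_⟩
          · rw [show k.val + (t + 1) = k.val + 1 + t by omega, ← Nat.mod_add_mod]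
            exact hk
          · rwa [show L + 1 - (t + 1) = L - t by omega]
      · rintro (⟨s, hs, hval⟩ | ⟨t, ht1, ht2, hk, hL⟩)
        · refine Or.inl ⟨⟨(s.val + 1) % n, Nat.mod_lt _ hn⟩, Or.inl ⟨s, hs, rfl⟩, ?_⟩
          show ((s.val + 1) % n + L) % n = n - 1
          rw [Nat.mod_add_mod, show s.val + 1 + L = s.val + (L + 1) by omega]
          exact hval
        · rcases Nat.lt_or_ge t 2 with ht | ht
          · have ht' : t = 1 := by omega
            subst ht'
            have hc : (k.val + 1) % m = m - 1 := hk
            refine Or.inl ⟨⟨0, hn⟩, Or.inr ?_, ?_⟩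
            · rw [if_pos hc]; rfl
            · show (0 + L) % n = n - 1
              rw [Nat.zero_add]
              rwa [show L + 1 - 1 = L by omega] at hL
          · refine Or.inr ⟨t - 1, by omega, by omega, ?_, ?_⟩
            · rw [Nat.mod_add_mod, show k.val + 1 + (t - 1) = k.val + t by omega]
              exact hk
            · rwa [show L - (t - 1) = L + 1 - t by omega]

lemma stepPair_b_fst (hm : 0 < m) (hn : 0 < n) (hm2 : 2 ≤ m) (k : Fin m) (T : Set (Fin n)) :
    ((stepPair hm hn (k, T) 1).1).val
      = (if k.val = 0 then 1 else if k.val = 1 then 0 else k.val) := by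
  show ((dfaW1 m hm).step k 1).val = _
  simp only [dfaW1]
  norm_num
  rw [Nat.mod_eq_of_lt]
  have := k.isLt
  split_ifs <;> omega

lemma stepPair_b_snd (hm : 0 < m) (hn : 0 < n) (hn2 : 2 ≤ n) (k : Fin m) (T : Set (Fin n)) :
    (⟨1, by omega⟩ : Fin n) ∉ (stepPair hm hn (k, T) 1).2 := by
  rintro (⟨s, _, hval⟩ | h)
  · have h2 : ((dfaW2 n hn).step s 1).val = 1 := congrArg Fin.val hval
    simp only [dfaW2] at h2
    norm_num at h2
    rw [Nat.mod_eq_of_lt (by have := s.isLt; split_ifs <;> omega)] at h2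
    split_ifs at h2 <;> omega
  · rcases Decidable.em ((dfaW1 m hm).step k 1 = (⟨m - 1, by omega⟩ : Fin m)) with hc | hc
    · rw [if_pos hc] at h
      have := congrArg Fin.val (Set.mem_singleton_iff.mp h)
      simp at this
    · rw [if_neg hc] at h
      exact Set.notMem_empty _ h

lemma runPair_append (hm : 0 < m) (hn : 0 < n) (p : Fin m × Set (Fin n))
    (u v : List (Fin 2)) :
    runPair hm hn p (u ++ v) = runPair hm hn (runPair hm hn p u) v := by
  simp [runPair, List.foldl_append]

lemma keyB (hm3 : 3 ≤ m) (hn3 : 3 ≤ n) (hm : 0 < m) (hn : 0 < n)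
    (k : Fin m) (T : Set (Fin n)) :
    ((⟨n - 1, Nat.sub_lt hn Nat.one_pos⟩ : Fin n) ∈
        (runPair hm hn (k, T) (1 :: List.replicate (2 * n - 2) 0)).2)
      ↔ ((if k.val = 0 then 1 else if k.val = 1 then 0 else k.val) + (n - 1)) % m = m - 1 := by
  rw [runPair_cons]
  rcases hp : stepPair hm hn (k, T) 1 with ⟨k₂, T₂⟩
  have hk₂ : k₂.val = (if k.val = 0 then 1 else if k.val = 1 then 0 else k.val) := by
    rw [← stepPair_b_fst hm hn (by omega) k T, hp]
  have hT₂ : (⟨1, by omega⟩ : Fin n) ∉ T₂ := by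
    rw [← show (stepPair hm hn (k, T) 1).2 = T₂ from by rw [hp]]
    exact stepPair_b_snd hm hn (by omega) k T
  rw [memB hm hn]
  constructor
  · rintro (⟨s, hs, hval⟩ | ⟨t, ht1, ht2, hk, hL⟩)
    · exfalso
      have hs1 : s.val = 1 := by
        have hslt := s.isLt
        rcases le_or_gt 2 s.val with h2 | h2
        · rw [show s.val + (2 * n - 2) = (s.val - 2) + n * 2 by omega,
              Nat.add_mul_mod_self_left, Nat.mod_eq_of_lt (by omega)] at hval
          omega
        · rw [show s.val + (2 * n - 2) = (s.val + n - 2) + n by omega,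
              Nat.add_mod_right, Nat.mod_eq_of_lt (by omega)] at hval
          omega
      exact hT₂ (by rwa [show (⟨1, by omega⟩ : Fin n) = s from (Fin.ext hs1).symm])
    · have ht : t = n - 1 := by
        rcases le_or_gt t (n - 2) with h2 | h2
        · rw [show 2 * n - 2 - t = (n - 2 - t) + n by omega,
              Nat.add_mod_right, Nat.mod_eq_of_lt (by omega)] at hL
          omega
        · rw [Nat.mod_eq_of_lt (by omega)] at hL
          omega
      subst ht
      rwa [hk₂] at hk
  · intro h
    refine Or.inr ⟨n - 1, by omega, by omega, by rwa [hk₂], ?_⟩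
    rw [show 2 * n - 2 - (n - 1) = n - 1 by omega, Nat.mod_eq_of_lt (by omega)]

lemma main_iff (hm : 0 < m) (hn : 0 < n) (k : Fin m) (T : Set (Fin n)) (w : List (Fin 2)) :
    (Sum.inr (⟨n - 1, by omega⟩ : Fin n) ∈
        (nfaConcat (dfaW1 m hm).toNFA (dfaW2 n hn).toNFA).toDFA.evalFrom
          ({Sum.inl k} ∪ Sum.inr '' T) w)
      ↔ (⟨n - 1, by omega⟩ : Fin n) ∈ (runPair hm hn (k, T) w).2 := by
  rw [show ({Sum.inl k} ∪ Sum.inr '' T : Set (Fin m ⊕ Fin n)) = enc (k, T) from rfl,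
    evalFrom_enc, mem_enc_inr]

end BrzHelp


open BrzHelp

/-- In the DFA obtained by the subset construction from the concatenation NFA `A_1·A_2`
of the two-letter Brzozowski pair, any two distinct valid states `(p_i, S)` and
`(p_{i'}, S')` — identified with the subsets `{p_i} ∪ {q_j : j ∈ S}`, with `q_0 ∈ S`
whenever `i = m−1` — are non-equivalent: some word `w` sends exactly one of them to a
set containing the final state `q_{n−1}`. -/
theorem two_letter_valid_states_nonequivalent (m n : ℕ) (hm : 3 ≤ m) (hn : 3 ≤ n)
    (i i' : Fin m) (S S' : Set (Fin n))
    (hv : i.val = m - 1 → (⟨0, by omega⟩ : Fin n) ∈ S)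
    (hv' : i'.val = m - 1 → (⟨0, by omega⟩ : Fin n) ∈ S')
    (hne : ¬ (i = i' ∧ S = S')) :
    ∃ w : List (Fin 2),
      ¬ ((Sum.inr (⟨n - 1, by omega⟩ : Fin n) ∈
            (nfaConcat (dfaW1 m (by omega)).toNFA (dfaW2 n (by omega)).toNFA).toDFA.evalFrom
              ({Sum.inl i} ∪ Sum.inr '' S) w) ↔
         (Sum.inr (⟨n - 1, by omega⟩ : Fin n) ∈
            (nfaConcat (dfaW1 m (by omega)).toNFA (dfaW2 n (by omega)).toNFA).toDFA.evalFrom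
              ({Sum.inl i'} ∪ Sum.inr '' S') w)) := by
  have hm0 : 0 < m := by omega
  have hn0 : 0 < n := by omega
  by_cases hS : S = S'
  · -- S = S', so i ≠ i'
    have hii : i.val ≠ i'.val := fun h => hne ⟨Fin.ext h, hS⟩
    obtain ⟨y, hylt, hykey⟩ : ∃ y, y < m ∧ (y + (n - 1)) % m = m - 1 := by
      refine ⟨(2 * m - 1 - (n - 1) % m) % m, Nat.mod_lt _ hm0, ?_⟩
      obtain ⟨c, hc⟩ : ∃ c, n - 1 = m * c + (n - 1) % m :=
        ⟨(n - 1) / m, (Nat.div_add_mod _ _).symm⟩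
      have hqlt : (n - 1) % m < m := Nat.mod_lt _ hm0
      rw [Nat.mod_add_mod]
      nth_rewrite 2 [hc]
      rw [
        show 2 * m - 1 - (n - 1) % m + (m * c + (n - 1) % m) = m - 1 + m * (c + 1) by
          have h2 : m * (c + 1) = m * c + m := by ring
          omega,
        Nat.add_mul_mod_self_left, Nat.mod_eq_of_lt (by omega)]
    obtain ⟨x0, hx0lt, hgx0⟩ :
        ∃ x0, x0 < m ∧ (if x0 = 0 then 1 else if x0 = 1 then 0 else x0) = y := by
      by_cases h0 : y = 0
      · exact ⟨1, by omega, by simp [h0]⟩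
      · by_cases h1 : y = 1
        · exact ⟨0, by omega, by simp [h1]⟩
        · exact ⟨y, hylt, by simp [h0, h1]⟩
    obtain ⟨r, hrL⟩ : ∃ r, (i.val + r) % m = x0 :=
      ⟨x0 + m - i.val, by
        rw [show i.val + (x0 + m - i.val) = x0 + m from by have := i.isLt; omega,
          Nat.add_mod_right, Nat.mod_eq_of_lt hx0lt]⟩
    refine ⟨List.replicate r 0 ++ (1 :: List.replicate (2 * n - 2) 0), ?_⟩
    rw [main_iff hm0 hn0, main_iff hm0 hn0, runPair_append, runPair_append,
      keyB hm hn hm0 hn0, keyB hm hn hm0 hn0, runPair_fst_a, runPair_fst_a]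
    intro hiff
    have hP : ((if (i.val + r) % m = 0 then 1 else
        if (i.val + r) % m = 1 then 0 else (i.val + r) % m) + (n - 1)) % m = m - 1 := by
      rw [hrL, hgx0]; exact hykey
    have hQ := hiff.mp hP
    set v' := (i'.val + r) % m with hv'def
    have hv'lt : v' < m := Nat.mod_lt _ hm0
    have hgvlt : (if v' = 0 then 1 else if v' = 1 then 0 else v') < m := by
      split_ifs <;> omega
    have hmod : (if v' = 0 then 1 else if v' = 1 then 0 else v') ≡ y [MOD m] := by
      apply Nat.ModEq.add_right_cancel' (n - 1)
      show ((if v' = 0 then 1 else if v' = 1 then 0 else v') + (n - 1)) % m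
          = (y + (n - 1)) % m
      rw [hykey]; exact hQ
    have hgvy : (if v' = 0 then 1 else if v' = 1 then 0 else v') = y := by
      have h2 : (if v' = 0 then 1 else if v' = 1 then 0 else v') % m = y % m := hmod
      rwa [Nat.mod_eq_of_lt hgvlt, Nat.mod_eq_of_lt hylt] at h2
    have hvx : v' = x0 := by
      rw [← hgx0] at hgvy
      split_ifs at hgvy <;> omega
    have hmod2 : i'.val ≡ i.val [MOD m] := by
      apply Nat.ModEq.add_right_cancel' r
      show (i'.val + r) % m = (i.val + r) % m
      rw [hrL, ← hv'def, hvx]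
    rw [Nat.ModEq, Nat.mod_eq_of_lt i'.isLt, Nat.mod_eq_of_lt i.isLt] at hmod2
    exact hii hmod2.symm
  · -- S ≠ S'
    obtain ⟨j, hj⟩ : ∃ j, ¬ (j ∈ S ↔ j ∈ S') := by
      by_contra hall
      push_neg at hall
      exact hS (Set.ext fun x => by by_contra hx; exact absurd (hall x) hx)
    refine ⟨List.replicate (n - 1 - j.val) 0, ?_⟩
    rw [main_iff hm0 hn0, main_iff hm0 hn0, memA hm0 hn0 _ (by omega),
      memA hm0 hn0 _ (by omega)]
    have hjj : (⟨n - 1 - (n - 1 - j.val), by omega⟩ : Fin n) = j := by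
      apply Fin.ext
      show n - 1 - (n - 1 - j.val) = j.val
      have := j.isLt
      omega
    rw [hjj]
    exact hj
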